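/- The family g(t) = (E₁/√t)(e^{2z}dx² + e^{-2z}dy²) + 2√t dz² on ℝ³ (t > 0, E₁ > 0) satisfies g(t) = t^{1/2} ψ_t^* g(1), where ψ_t(x,y,z) = (t^{-1/2}x, t^{-1/2}y, z); hence g(1) is a cross-curvature soliton metric on Sol with scaling exponent 1/2. -/
import Mathlib


open Matrix

/-- The metric `(E₁/√t)(e^{2z}dx² + e^{-2z}dy²) + 2√t dz²` on ℝ³ at `p = (x,y,z)`. -/
noncomputable def solXCFMat (E₁ t : ℝ) (p : ℝ × ℝ × ℝ) : Matrix (Fin 3) (Fin 3) ℝ :=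
  !![E₁ * t ^ (-(1 / 2) : ℝ) * Real.exp (2 * p.2.2), 0, 0;
     0, E₁ * t ^ (-(1 / 2) : ℝ) * Real.exp (-(2 * p.2.2)), 0;
     0, 0, 2 * t ^ ((1 / 2) : ℝ)]

/-- The Sol cross curvature soliton: the family
`g(t) = (E₁/√t)(e^{2z}dx² + e^{-2z}dy²) + 2√t dz²` (`t > 0`, `E₁ > 0`) satisfies
`g(t) = t^{1/2} ψ_t^* g(1)` where `ψ_t(x,y,z) = (t^{-1/2}x, t^{-1/2}y, z)`; hence `g(1)`
is a cross-curvature soliton on Sol with scaling exponent `1/2`. The pullback is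
computed as `Jᵀ g(1)(ψ_t p) J` with `J` the Jacobian of `ψ_t`. -/
theorem sol_xcf_soliton (E₁ : ℝ) (hE₁ : 0 < E₁) :
    ∀ t : ℝ, 0 < t → ∀ p : ℝ × ℝ × ℝ,
      let ψ : ℝ × ℝ × ℝ → ℝ × ℝ × ℝ :=
        fun q => (t ^ (-(1 / 2) : ℝ) * q.1, t ^ (-(1 / 2) : ℝ) * q.2.1, q.2.2)
      let J : Matrix (Fin 3) (Fin 3) ℝ :=
        Matrix.diagonal ![t ^ (-(1 / 2) : ℝ), t ^ (-(1 / 2) : ℝ), 1]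
      t ^ ((1 / 2) : ℝ) • (Jᵀ * solXCFMat E₁ 1 (ψ p) * J) = solXCFMat E₁ t p := by
  intro t ht p ψ J
  have h1 : t ^ ((1/2) : ℝ) * (t ^ ((-1)/2 : ℝ)) ^ 2 = t ^ ((-1)/2 : ℝ) := by
    rw [← Real.rpow_natCast (t ^ ((-1)/2 : ℝ)), ← Real.rpow_mul ht.le,
      ← Real.rpow_add ht]
    norm_num
  ext i j
  fin_cases i <;> fin_cases j <;>
    simp [solXCFMat, J, ψ, Matrix.mul_apply, Fin.sum_univ_three, Matrix.diagonal,
      Matrix.vecHead, Matrix.vecTail] <;>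
    ring_nf <;>
    rw [show ((-1:ℝ)/2) = (-(1/2) : ℝ) from by norm_num] at h1 ⊢ <;>
    rw [h1]
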